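/- Let H_0 ∈ ℝ^{N×T×F} be a third-order tensor and suppose B1 ∈ ℝ^{N×N}, B2 ∈ ℝ^{T×T}, B3 ∈ ℝ^{F×F} admit diagonalizations B1 = P1 Λ1 P1⁻¹, B2 = P2 Λ2 P2⁻¹, B3 = P3 Λ3 P3⁻¹ with Λ1 = diag(λ_1,…,λ_N), Λ2 = diag(μ_1,…,μ_T), Λ3 = diag(ν_1,…,ν_F), and assume λ_i + μ_j + ν_k ≠ 0 for all indices. Set H̃_0 = H_0 ×_1 ((P1⁻¹)ᵀ) ×_2 ((P2⁻¹)ᵀ) ×_3 ((P3⁻¹)ᵀ) (so that mode-multiplying H̃_0 back by P1ᵀ, P2ᵀ, P3ᵀ recovers H_0). Then ∫_0^t H_0 ×_1 exp((t−τ)B1ᵀ) ×_2 exp((t−τ)B2ᵀ) ×_3 exp((t−τ)B3ᵀ) dτ equals the tensor whose (i,j,k)-transformed entries are (H̃_0)_{ijk}(e^{(λ_i+μ_j+ν_k)t} − 1)/(λ_i+μ_j+ν_k), mode-multiplied by P1ᵀ, P2ᵀ, P3ᵀ on modes 1, 2, 3 respectively. -/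

import Mathlib

open scoped BigOperators
open Matrix intervalIntegral

noncomputable section

/-- Mode-1 product of a third-order tensor with a matrix. -/
def tmul1 {n1 n2 n3 m : ℕ} (T : Fin n1 → Fin n2 → Fin n3 → ℝ)
    (M : Matrix (Fin n1) (Fin m) ℝ) : Fin m → Fin n2 → Fin n3 → ℝ :=
  fun l j k => ∑ i, T i j k * M i l

/-- Mode-2 product of a third-order tensor with a matrix. -/
def tmul2 {n1 n2 n3 m : ℕ} (T : Fin n1 → Fin n2 → Fin n3 → ℝ)
    (M : Matrix (Fin n2) (Fin m) ℝ) : Fin n1 → Fin m → Fin n3 → ℝ :=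
  fun i l k => ∑ j, T i j k * M j l

/-- Mode-3 product of a third-order tensor with a matrix. -/
def tmul3 {n1 n2 n3 m : ℕ} (T : Fin n1 → Fin n2 → Fin n3 → ℝ)
    (M : Matrix (Fin n3) (Fin m) ℝ) : Fin n1 → Fin n2 → Fin m → ℝ :=
  fun i j l => ∑ k, T i j k * M k l

lemma tmul1_tmul1 {n1 n2 n3 m p : ℕ} (H : Fin n1 → Fin n2 → Fin n3 → ℝ)
    (M : Matrix (Fin n1) (Fin m) ℝ) (M' : Matrix (Fin m) (Fin p) ℝ) :
    tmul1 (tmul1 H M) M' = tmul1 H (M * M') := by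
  funext l j k
  simp only [tmul1, Matrix.mul_apply, Finset.mul_sum, Finset.sum_mul]
  rw [Finset.sum_comm]
  exact Finset.sum_congr rfl fun a _ => Finset.sum_congr rfl fun i _ => by ring

lemma tmul2_tmul2 {n1 n2 n3 m p : ℕ} (H : Fin n1 → Fin n2 → Fin n3 → ℝ)
    (M : Matrix (Fin n2) (Fin m) ℝ) (M' : Matrix (Fin m) (Fin p) ℝ) :
    tmul2 (tmul2 H M) M' = tmul2 H (M * M') := by
  funext i l k
  simp only [tmul2, Matrix.mul_apply, Finset.mul_sum, Finset.sum_mul]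
  rw [Finset.sum_comm]
  exact Finset.sum_congr rfl fun a _ => Finset.sum_congr rfl fun j _ => by ring

lemma tmul3_tmul3 {n1 n2 n3 m p : ℕ} (H : Fin n1 → Fin n2 → Fin n3 → ℝ)
    (M : Matrix (Fin n3) (Fin m) ℝ) (M' : Matrix (Fin m) (Fin p) ℝ) :
    tmul3 (tmul3 H M) M' = tmul3 H (M * M') := by
  funext i j l
  simp only [tmul3, Matrix.mul_apply, Finset.mul_sum, Finset.sum_mul]
  rw [Finset.sum_comm]
  exact Finset.sum_congr rfl fun a _ => Finset.sum_congr rfl fun kk _ => by ring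

lemma tmul2_tmul1 {n1 n2 n3 m p : ℕ} (H : Fin n1 → Fin n2 → Fin n3 → ℝ)
    (A : Matrix (Fin n1) (Fin m) ℝ) (B : Matrix (Fin n2) (Fin p) ℝ) :
    tmul2 (tmul1 H A) B = tmul1 (tmul2 H B) A := by
  funext l m' k
  simp only [tmul1, tmul2, Finset.sum_mul]
  rw [Finset.sum_comm]
  exact Finset.sum_congr rfl fun a _ => Finset.sum_congr rfl fun j _ => by ring

lemma tmul3_tmul1 {n1 n2 n3 m p : ℕ} (H : Fin n1 → Fin n2 → Fin n3 → ℝ)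
    (A : Matrix (Fin n1) (Fin m) ℝ) (B : Matrix (Fin n3) (Fin p) ℝ) :
    tmul3 (tmul1 H A) B = tmul1 (tmul3 H B) A := by
  funext l j m'
  simp only [tmul1, tmul3, Finset.sum_mul]
  rw [Finset.sum_comm]
  exact Finset.sum_congr rfl fun a _ => Finset.sum_congr rfl fun kk _ => by ring

lemma tmul3_tmul2 {n1 n2 n3 m p : ℕ} (H : Fin n1 → Fin n2 → Fin n3 → ℝ)
    (A : Matrix (Fin n2) (Fin m) ℝ) (B : Matrix (Fin n3) (Fin p) ℝ) :
    tmul3 (tmul2 H A) B = tmul2 (tmul3 H B) A := by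
  funext i l m'
  simp only [tmul2, tmul3, Finset.sum_mul]
  rw [Finset.sum_comm]
  exact Finset.sum_congr rfl fun a _ => Finset.sum_congr rfl fun kk _ => by ring

lemma split {n1 n2 n3 m1 m2 m3 p1 p2 p3 : ℕ} (X : Fin n1 → Fin n2 → Fin n3 → ℝ)
    (M1 : Matrix (Fin n1) (Fin m1) ℝ) (N1 : Matrix (Fin m1) (Fin p1) ℝ)
    (M2 : Matrix (Fin n2) (Fin m2) ℝ) (N2 : Matrix (Fin m2) (Fin p2) ℝ)
    (M3 : Matrix (Fin n3) (Fin m3) ℝ) (N3 : Matrix (Fin m3) (Fin p3) ℝ) :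
    tmul3 (tmul2 (tmul1 X (M1 * N1)) (M2 * N2)) (M3 * N3)
      = tmul3 (tmul2 (tmul1 (tmul3 (tmul2 (tmul1 X M1) M2) M3) N1) N2) N3 := by
  rw [← tmul1_tmul1, ← tmul2_tmul2, ← tmul3_tmul3, tmul2_tmul1, tmul3_tmul2, tmul3_tmul1]

lemma tmul1_diagonal {n1 n2 n3 : ℕ} (H : Fin n1 → Fin n2 → Fin n3 → ℝ) (u : Fin n1 → ℝ) :
    tmul1 H (Matrix.diagonal u) = fun l j k => H l j k * u l := by
  funext l j k
  simp [tmul1, Matrix.diagonal_apply, mul_ite, mul_zero]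

lemma tmul2_diagonal {n1 n2 n3 : ℕ} (H : Fin n1 → Fin n2 → Fin n3 → ℝ) (u : Fin n2 → ℝ) :
    tmul2 H (Matrix.diagonal u) = fun i l k => H i l k * u l := by
  funext i l k
  simp [tmul2, Matrix.diagonal_apply, mul_ite, mul_zero]

lemma tmul3_diagonal {n1 n2 n3 : ℕ} (H : Fin n1 → Fin n2 → Fin n3 → ℝ) (u : Fin n3 → ℝ) :
    tmul3 H (Matrix.diagonal u) = fun i j l => H i j l * u l := by
  funext i j l
  simp [tmul3, Matrix.diagonal_apply, mul_ite, mul_zero]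

lemma exp_smul_conj {n : ℕ} (P Q : Matrix (Fin n) (Fin n) ℝ)
    (hPQ : P * Q = 1) (_hQP : Q * P = 1) (v : Fin n → ℝ) (s : ℝ) :
    NormedSpace.exp (s • (P * Matrix.diagonal v * Q)ᵀ)
      = Qᵀ * Matrix.diagonal (fun a => Real.exp (v a * s)) * Pᵀ := by
  have h1 : (P * Matrix.diagonal v * Q)ᵀ = Qᵀ * Matrix.diagonal v * Pᵀ := by
    rw [Matrix.transpose_mul, Matrix.transpose_mul, Matrix.diagonal_transpose, Matrix.mul_assoc]
  have h2 : s • (Qᵀ * Matrix.diagonal v * Pᵀ) = Qᵀ * Matrix.diagonal (fun a => s * v a) * Pᵀ := by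
    have : s • Matrix.diagonal v = Matrix.diagonal (fun a => s * v a) := by
      ext i j
      by_cases h : i = j <;> simp [Matrix.diagonal_apply, h]
    rw [← this, Matrix.mul_smul, Matrix.smul_mul]
  set U : (Matrix (Fin n) (Fin n) ℝ)ˣ :=
    ⟨Qᵀ, Pᵀ, by rw [← Matrix.transpose_mul, hPQ, Matrix.transpose_one],
      by rw [← Matrix.transpose_mul, _hQP, Matrix.transpose_one]⟩ with hU
  have h3 : Qᵀ * Matrix.diagonal (fun a => s * v a) * Pᵀ
      = (U : Matrix (Fin n) (Fin n) ℝ) * Matrix.diagonal (fun a => s * v a) * ((U⁻¹ : _) : Matrix (Fin n) (Fin n) ℝ) := rfl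
  rw [h1, h2, h3, Matrix.exp_units_conj, Matrix.exp_diagonal]
  have h4 : (NormedSpace.exp fun a => s * v a) = fun a => Real.exp (v a * s) := by
    funext a
    rw [Pi.coe_exp, ← congrFun Real.exp_eq_exp_ℝ, mul_comm]
  rw [h4]
  rfl

lemma int_exp (c t : ℝ) (hc : c ≠ 0) :
    (∫ τ in (0:ℝ)..t, Real.exp (c * (t - τ))) = (Real.exp (c * t) - 1) / c := by
  have h1 : (∫ τ in (0:ℝ)..t, Real.exp (c * (t - τ)))
      = ∫ τ in (t - t)..(t - 0), Real.exp (c * τ) :=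
    intervalIntegral.integral_comp_sub_left (fun τ => Real.exp (c * τ)) t
  rw [h1]
  simp only [sub_self, sub_zero]
  rw [intervalIntegral.integral_comp_mul_left (fun x => Real.exp x) hc]
  simp [integral_exp, Real.exp_zero, smul_eq_mul]
  ring

/-- Closed-form evaluation of the integral term of the analytic ODE solution for
diagonalizable matrices `B₁ = P₁Λ₁P₁⁻¹`, `B₂ = P₂Λ₂P₂⁻¹`, `B₃ = P₃Λ₃P₃⁻¹` with
`λ_i + μ_j + ν_k ≠ 0` for all indices. -/
theorem integral_term_closed_form {N T F : ℕ}
    (H0 : Fin N → Fin T → Fin F → ℝ)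
    (B1 P1 Q1 : Matrix (Fin N) (Fin N) ℝ) (lam : Fin N → ℝ)
    (B2 P2 Q2 : Matrix (Fin T) (Fin T) ℝ) (mu : Fin T → ℝ)
    (B3 P3 Q3 : Matrix (Fin F) (Fin F) ℝ) (nu : Fin F → ℝ)
    (hP1 : P1 * Q1 = 1) (hQ1 : Q1 * P1 = 1)
    (hP2 : P2 * Q2 = 1) (hQ2 : Q2 * P2 = 1)
    (hP3 : P3 * Q3 = 1) (hQ3 : Q3 * P3 = 1)
    (hB1 : B1 = P1 * Matrix.diagonal lam * Q1)
    (hB2 : B2 = P2 * Matrix.diagonal mu * Q2)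
    (hB3 : B3 = P3 * Matrix.diagonal nu * Q3)
    (hne : ∀ (i : Fin N) (j : Fin T) (k : Fin F), lam i + mu j + nu k ≠ 0)
    (H0t : Fin N → Fin T → Fin F → ℝ)
    (hH0t : H0t = tmul3 (tmul2 (tmul1 H0 Q1ᵀ) Q2ᵀ) Q3ᵀ)
    (t : ℝ) :
    (fun i j k => ∫ τ in (0:ℝ)..t,
        tmul3 (tmul2 (tmul1 H0 (NormedSpace.exp ((t - τ) • B1ᵀ)))
          (NormedSpace.exp ((t - τ) • B2ᵀ)))
          (NormedSpace.exp ((t - τ) • B3ᵀ)) i j k) =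
      tmul3 (tmul2 (tmul1
        (fun i j k => H0t i j k * (Real.exp ((lam i + mu j + nu k) * t) - 1) /
          (lam i + mu j + nu k)) P1ᵀ) P2ᵀ) P3ᵀ := by
  have hE1 : ∀ τ : ℝ, NormedSpace.exp ((t - τ) • B1ᵀ)
      = Q1ᵀ * Matrix.diagonal (fun a => Real.exp (lam a * (t - τ))) * P1ᵀ := fun τ => by
    rw [hB1]; exact exp_smul_conj P1 Q1 hP1 hQ1 lam (t - τ)
  have hE2 : ∀ τ : ℝ, NormedSpace.exp ((t - τ) • B2ᵀ)
      = Q2ᵀ * Matrix.diagonal (fun a => Real.exp (mu a * (t - τ))) * P2ᵀ := fun τ => by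
    rw [hB2]; exact exp_smul_conj P2 Q2 hP2 hQ2 mu (t - τ)
  have hE3 : ∀ τ : ℝ, NormedSpace.exp ((t - τ) • B3ᵀ)
      = Q3ᵀ * Matrix.diagonal (fun a => Real.exp (nu a * (t - τ))) * P3ᵀ := fun τ => by
    rw [hB3]; exact exp_smul_conj P3 Q3 hP3 hQ3 nu (t - τ)
  have key : ∀ τ : ℝ,
      tmul3 (tmul2 (tmul1 H0 (NormedSpace.exp ((t - τ) • B1ᵀ)))
          (NormedSpace.exp ((t - τ) • B2ᵀ)))
          (NormedSpace.exp ((t - τ) • B3ᵀ))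
      = tmul3 (tmul2 (tmul1
          (fun a b c => H0t a b c * Real.exp ((lam a + mu b + nu c) * (t - τ)))
          P1ᵀ) P2ᵀ) P3ᵀ := by
    intro τ
    rw [hE1 τ, hE2 τ, hE3 τ, split, split, ← hH0t, tmul1_diagonal, tmul2_diagonal,
      tmul3_diagonal]
    have hfun : (fun i j l => H0t i j l * Real.exp (lam i * (t - τ)) *
          Real.exp (mu j * (t - τ)) * Real.exp (nu l * (t - τ)))
        = fun a b c => H0t a b c * Real.exp ((lam a + mu b + nu c) * (t - τ)) := by
      funext a b c
      rw [add_mul, add_mul, Real.exp_add, Real.exp_add]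
      ring
    rw [hfun]
  funext i j k
  simp only [key]
  simp only [tmul1, tmul2, tmul3]
  rw [intervalIntegral.integral_finset_sum (fun c _ =>
    (Continuous.intervalIntegrable (by fun_prop) 0 t))]
  refine Finset.sum_congr rfl fun c _ => ?_
  rw [intervalIntegral.integral_mul_const,
    intervalIntegral.integral_finset_sum (fun b _ =>
      (Continuous.intervalIntegrable (by fun_prop) 0 t))]
  congr 1
  refine Finset.sum_congr rfl fun b _ => ?_
  rw [intervalIntegral.integral_mul_const,
    intervalIntegral.integral_finset_sum (fun a _ =>
      (Continuous.intervalIntegrable (by fun_prop) 0 t))]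
  congr 1
  refine Finset.sum_congr rfl fun a _ => ?_
  rw [intervalIntegral.integral_mul_const, intervalIntegral.integral_const_mul,
    int_exp _ _ (hne a b c)]
  ring
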